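/- Let μ̃ be a symmetric σ-finite measure on X × X and μ ≪ μ̃ a probability measure with density f = dμ/dμ̃. Define α(x,x') = min(1, f(x',x)/f(x,x')) on the set where f(x,x') > 0 (and α = 0 elsewhere). Then the function (x,x') ↦ f(x,x') α(x,x') is symmetric in (x, x') μ̃-a.e.; consequently the Metropolis–Hastings kernel built from the proposal and this acceptance probability is reversible with respect to the first marginal of μ. -/

import Mathlib

open MeasureTheory

lemma mh_aux (a b : ENNReal) (ha : a < ⊤) :
    a * (if 0 < a then min 1 (b / a) else 0) = min a b := by
  by_cases h : 0 < a
  · rw [if_pos h]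
    rcases le_total a b with hab | hab
    · have h1 : (1 : ENNReal) ≤ b / a :=
        (ENNReal.le_div_iff_mul_le (Or.inl h.ne') (Or.inl ha.ne)).mpr (by simpa using hab)
      rw [min_eq_left h1, mul_one, min_eq_left hab]
    · have h1 : b / a ≤ 1 := ENNReal.div_le_of_le_mul (by simpa using hab)
      rw [min_eq_right h1, ENNReal.mul_div_cancel h.ne' ha.ne, min_eq_right hab]
  · have ha0 : a = 0 := by simpa [pos_iff_ne_zero] using h
    simp [ha0]

/-- Generalised detailed balance: for a symmetric σ-finite measure `μ̃` on `X × X`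
and `μ ≪ μ̃` a probability measure with density `f = dμ/dμ̃`, the function
`(x,x') ↦ f(x,x') α(x,x')` with
`α(x,x') = min(1, f(x',x)/f(x,x'))` where `f(x,x') > 0` and `α = 0` elsewhere,
is `μ̃`-a.e. symmetric in `(x,x')`. -/
theorem mh_detailed_balance_symmetric {X : Type*} [MeasurableSpace X]
    (μt : Measure (X × X)) [SigmaFinite μt] (hsymm : μt.map Prod.swap = μt)
    (μ : Measure (X × X)) [IsProbabilityMeasure μ] (hac : μ ≪ μt)
    (f : X × X → ENNReal) (hf : f = μ.rnDeriv μt)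
    (α : X × X → ENNReal)
    (hα : α = fun p => if 0 < f p then min 1 (f (p.2, p.1) / f p) else 0) :
    (fun p : X × X => f p * α p)
      =ᵐ[μt] (fun p : X × X => f (p.2, p.1) * α (p.2, p.1)) := by
  have hmeas : Measurable f := hf ▸ μ.measurable_rnDeriv μt
  have h1 : ∀ᵐ p ∂μt, f p < ⊤ := hf ▸ μ.rnDeriv_lt_top μt
  have h2 : ∀ᵐ p ∂μt, f (p.2, p.1) < ⊤ := by
    have hs : MeasurableSet {q : X × X | f q < ⊤} := hmeas measurableSet_Iio
    have := (ae_map_iff (f := Prod.swap) measurable_swap.aemeasurable hs).mp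
      (by rw [hsymm]; exact h1)
    simpa [Prod.swap] using this
  filter_upwards [h1, h2] with p ha hb
  simp only [hα]
  rw [mh_aux _ _ ha, mh_aux _ _ hb, min_comm]
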